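/- As formal power series in u over ℚ, (1 + 3u)^{1/4} · ₂F₁(1/4, 3/4; 1; u) = ₂F₁(1/12, 5/12; 1; 27u(1−u)²/(1+3u)³), where (1+3u)^{1/4} is the binomial series and the argument 27u(1−u)²/(1+3u)³ is expanded as a formal power series with zero constant term. -/

import Mathlib

open PowerSeries

/-- The Gauss hypergeometric series `₂F₁(a,b;1;t) = Σ (a)ₙ(b)ₙ/((1)ₙ n!) tⁿ` as a formal
power series over ℚ. -/
noncomputable def hyp (a b : ℚ) : PowerSeries ℚ :=
  PowerSeries.mk fun n =>
    ((ascPochhammer ℚ n).eval a * (ascPochhammer ℚ n).eval b) /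
      ((ascPochhammer ℚ n).eval 1 * (n.factorial : ℚ))

/-- Composition `F(w(t))` of formal power series, valid when `w` has zero constant term. -/
noncomputable def pscomp (F w : PowerSeries ℚ) : PowerSeries ℚ :=
  PowerSeries.mk fun n => ∑ k ∈ Finset.range (n + 1), coeff k F * coeff n (w ^ k)

namespace GA

open Finset

lemma coeff_pscomp (F w : PowerSeries ℚ) (n : ℕ) :
    coeff (R := ℚ) n (pscomp F w) = ∑ k ∈ range (n + 1), coeff (R := ℚ) k F * coeff (R := ℚ) n (w ^ k) := by
  simp [pscomp]

variable {w : PowerSeries ℚ} (hw0 : constantCoeff (R := ℚ) w = 0)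

include hw0 in
lemma coeff_pow_zero {k n : ℕ} (h : n < k) : coeff (R := ℚ) n (w ^ k) = 0 := by
  obtain ⟨v, rfl⟩ := X_dvd_iff.mpr hw0
  rw [mul_pow, coeff_X_pow_mul', if_neg (by omega)]

include hw0 in
lemma coeff_eval₂ (P : Polynomial ℚ) (n : ℕ) :
    coeff (R := ℚ) n (Polynomial.eval₂ (C (R := ℚ)) w P) = ∑ k ∈ range (n + 1), P.coeff k * coeff (R := ℚ) n (w ^ k) := by
  set m := max (n + 1) (P.natDegree + 1) with hm
  rw [Polynomial.eval₂_eq_sum_range' (C (R := ℚ)) (by omega : P.natDegree < m) w, map_sum]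
  rw [← Finset.sum_subset (Finset.range_subset_range.mpr (by omega : n + 1 ≤ m))]
  · exact Finset.sum_congr rfl fun k _ => coeff_C_mul ..
  · intro k _ hk
    rw [coeff_C_mul, coeff_pow_zero hw0 (by simpa using hk), mul_zero]

include hw0 in
lemma coeff_pscomp_eval₂ (F : PowerSeries ℚ) {n m : ℕ} (h : n < m) :
    coeff (R := ℚ) n (pscomp F w) = coeff (R := ℚ) n (Polynomial.eval₂ (C (R := ℚ)) w (trunc m F)) := by
  rw [coeff_pscomp, coeff_eval₂ hw0]
  refine Finset.sum_congr rfl fun k hk => ?_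
  rw [coeff_trunc, if_pos (by simp at hk; omega)]

lemma pscomp_add (F G : PowerSeries ℚ) : pscomp (F + G) w = pscomp F w + pscomp G w := by
  ext n
  simp [coeff_pscomp, add_mul, Finset.sum_add_distrib]

lemma pscomp_sub (F G : PowerSeries ℚ) : pscomp (F - G) w = pscomp F w - pscomp G w := by
  ext n
  simp [coeff_pscomp, sub_mul, Finset.sum_sub_distrib]

lemma pscomp_C (r : ℚ) : pscomp (C (R := ℚ) r) w = C (R := ℚ) r := by
  ext n
  rw [coeff_pscomp]
  rw [Finset.sum_eq_single 0]
  · simp [coeff_C]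
  · intro k _ hk
    simp [coeff_C, hk]
  · simp

lemma pscomp_one : pscomp 1 w = 1 := by
  have := pscomp_C (w := w) 1
  simpa using this

lemma pscomp_ofNat (n : ℕ) [n.AtLeastTwo] :
    pscomp (OfNat.ofNat n) w = (OfNat.ofNat n : PowerSeries ℚ) := by
  have := pscomp_C (w := w) (OfNat.ofNat n)
  simpa [map_ofNat] using this

include hw0 in
lemma pscomp_X : pscomp X w = w := by
  ext n
  rw [coeff_pscomp, Finset.sum_eq_single 1]
  · simp
  · intro k _ hk
    simp [coeff_X, hk]
  · intro h
    simp at h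
    simp [h, coeff_X, coeff_zero_eq_constantCoeff, hw0]

include hw0 in
lemma coeff_eval₂_congr {P Q : Polynomial ℚ} {n : ℕ} (h : ∀ k ≤ n, P.coeff k = Q.coeff k) :
    coeff (R := ℚ) n (Polynomial.eval₂ (C (R := ℚ)) w P) = coeff (R := ℚ) n (Polynomial.eval₂ (C (R := ℚ)) w Q) := by
  rw [coeff_eval₂ hw0, coeff_eval₂ hw0]
  exact Finset.sum_congr rfl fun k hk => by rw [h k (by simp at hk; omega)]

include hw0 in
lemma pscomp_mul (F G : PowerSeries ℚ) : pscomp (F * G) w = pscomp F w * pscomp G w := by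
  ext n
  rw [coeff_pscomp_eval₂ hw0 (F * G) (Nat.lt_succ_self n), coeff_mul]
  have h1 : ∀ p ∈ antidiagonal n,
      coeff (R := ℚ) p.1 (pscomp F w) * coeff (R := ℚ) p.2 (pscomp G w)
      = coeff (R := ℚ) p.1 (Polynomial.eval₂ (C (R := ℚ)) w (trunc (n+1) F))
        * coeff (R := ℚ) p.2 (Polynomial.eval₂ (C (R := ℚ)) w (trunc (n+1) G)) := by
    intro p hp
    rw [Finset.HasAntidiagonal.mem_antidiagonal] at hp
    rw [coeff_pscomp_eval₂ hw0 F (by omega : p.1 < n+1),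
        coeff_pscomp_eval₂ hw0 G (by omega : p.2 < n+1)]
  rw [Finset.sum_congr rfl h1, ← coeff_mul, ← Polynomial.eval₂_mul]
  refine coeff_eval₂_congr hw0 fun k hk => ?_
  rw [coeff_trunc, if_pos (by omega), PowerSeries.coeff_mul, Polynomial.coeff_mul]
  refine Finset.sum_congr rfl fun p hp => ?_
  rw [Finset.HasAntidiagonal.mem_antidiagonal] at hp
  rw [coeff_trunc, if_pos (by omega), coeff_trunc, if_pos (by omega)]

include hw0 in
lemma pscomp_pow (F : PowerSeries ℚ) (k : ℕ) : pscomp (F ^ k) w = (pscomp F w) ^ k := by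
  induction k with
  | zero => simpa [pow_zero] using pscomp_one (w := w)
  | succ m ih => rw [pow_succ, pscomp_mul hw0, ih, pow_succ]

lemma deriv_eval₂ (P : Polynomial ℚ) :
    d⁄dX ℚ (Polynomial.eval₂ (C (R := ℚ)) w P)
      = Polynomial.eval₂ (C (R := ℚ)) w (Polynomial.derivative P) * d⁄dX ℚ w := by
  induction P using Polynomial.induction_on' with
  | add p q hp hq =>
    rw [Polynomial.eval₂_add, map_add, hp, hq, map_add, Polynomial.eval₂_add, add_mul]
  | monomial k a =>
    rw [Polynomial.eval₂_monomial, Polynomial.derivative_monomial, Polynomial.eval₂_monomial]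
    rw [Derivation.leibniz, Derivation.leibniz_pow, derivative_C]
    cases k with
    | zero => simp
    | succ m =>
      simp only [smul_eq_mul, nsmul_eq_mul, smul_zero, add_zero, Nat.add_sub_cancel,
        map_mul, map_natCast]
      push_cast
      ring

include hw0 in
lemma pscomp_deriv (F : PowerSeries ℚ) :
    d⁄dX ℚ (pscomp F w) = pscomp (d⁄dX ℚ F) w * d⁄dX ℚ w := by
  ext n
  rw [coeff_derivative, coeff_pscomp_eval₂ hw0 F (Nat.lt_succ_self (n+1)), ← coeff_derivative,
      deriv_eval₂, coeff_mul, coeff_mul]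
  refine Finset.sum_congr rfl fun p hp => ?_
  rw [Finset.HasAntidiagonal.mem_antidiagonal] at hp
  rw [coeff_pscomp_eval₂ hw0 (d⁄dX ℚ F) (by omega : p.1 < n+1), trunc_derivative]

lemma coeff_hyp (a b : ℚ) (n : ℕ) :
    coeff (R := ℚ) n (hyp a b) =
      ((ascPochhammer ℚ n).eval a * (ascPochhammer ℚ n).eval b) /
      ((n.factorial : ℚ) * (n.factorial : ℚ)) := by
  rw [hyp, coeff_mk, ascPochhammer_eval_one]

lemma constantCoeff_hyp (a b : ℚ) : constantCoeff (R := ℚ) (hyp a b) = 1 := by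
  have := coeff_hyp a b 0
  rw [coeff_zero_eq_constantCoeff] at this
  simpa [ascPochhammer_zero] using this

lemma hyp_rec (a b : ℚ) (n : ℕ) :
    ((n : ℚ) + 1) ^ 2 * coeff (R := ℚ) (n + 1) (hyp a b)
      = ((a + n) * (b + n)) * coeff (R := ℚ) n (hyp a b) := by
  rw [coeff_hyp, coeff_hyp, ascPochhammer_succ_right]
  have hfac : ((n + 1).factorial : ℚ) = (n.factorial : ℚ) * ((n : ℚ) + 1) := by
    rw [Nat.factorial_succ]; push_cast; ring
  have h0 : (n.factorial : ℚ) ≠ 0 := Nat.cast_ne_zero.mpr (Nat.factorial_ne_zero n)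
  simp only [Polynomial.eval_mul, Polynomial.eval_add, Polynomial.eval_X,
    Polynomial.eval_natCast, hfac]
  field_simp

lemma hyp_ODE (a b : ℚ) :
    (X - X ^ 2) * d⁄dX ℚ (d⁄dX ℚ (hyp a b))
      + (1 - C (R := ℚ) (a + b + 1) * X) * d⁄dX ℚ (hyp a b)
      = C (R := ℚ) (a * b) * hyp a b := by
  set H := hyp a b
  have hc : ∀ n, coeff (R := ℚ) n ((X - X^2) * d⁄dX ℚ (d⁄dX ℚ H)) =
      coeff (R := ℚ) n (X * d⁄dX ℚ (d⁄dX ℚ H)) - coeff (R := ℚ) n (X * (X * d⁄dX ℚ (d⁄dX ℚ H))) := by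
    intro n
    rw [sub_mul, map_sub, pow_two, mul_assoc]
  ext n
  rw [map_add, hc, coeff_C_mul, sub_mul, one_mul, map_sub, mul_assoc, coeff_C_mul]
  match n with
  | 0 =>
    simp only [coeff_zero_X_mul, coeff_derivative]
    have h0 := hyp_rec a b 0
    push_cast at h0 ⊢
    linear_combination h0
  | 1 =>
    simp only [coeff_succ_X_mul, coeff_zero_X_mul, coeff_derivative]
    have h1 := hyp_rec a b 1
    push_cast at h1 ⊢
    linear_combination h1
  | (m + 2) =>
    simp only [coeff_succ_X_mul, coeff_derivative]
    have h2 := hyp_rec a b (m + 2)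
    push_cast at h2 ⊢
    linear_combination h2

lemma vanish_mul {h : PowerSeries ℚ} {n : ℕ} (A : PowerSeries ℚ)
    (hh : ∀ j ≤ n, coeff (R := ℚ) j h = 0) : coeff (R := ℚ) n (A * h) = 0 := by
  rw [coeff_mul]
  refine Finset.sum_eq_zero fun p hp => ?_
  rw [Finset.HasAntidiagonal.mem_antidiagonal] at hp
  rw [hh p.2 (by omega), mul_zero]

lemma vanish_mul_d {h : PowerSeries ℚ} {n : ℕ} (A : PowerSeries ℚ)
    (hh : ∀ j ≤ n, coeff (R := ℚ) j h = 0) :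
    coeff (R := ℚ) n (A * d⁄dX ℚ h) = constantCoeff (R := ℚ) A * (coeff (R := ℚ) (n + 1) h * ((n : ℚ) + 1)) := by
  rw [coeff_mul, Finset.sum_eq_single (0, n)]
  · rw [coeff_derivative, coeff_zero_eq_constantCoeff]
  · intro p hp hne
    rw [Finset.HasAntidiagonal.mem_antidiagonal] at hp
    have : p.2 < n := by
      rcases Nat.lt_or_ge p.2 n with h | h
      · exact h
      · exfalso; apply hne
        have h2 : p.2 = n := by omega
        have h1 : p.1 = 0 := by omega
        ext <;> simp [h1, h2]
    rw [coeff_derivative, hh (p.2 + 1) (by omega), zero_mul, mul_zero]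
  · intro hmem
    exact absurd (by simp : (0, n) ∈ antidiagonal n) hmem

lemma sol_unique {h R Q1 Q0 : PowerSeries ℚ}
    (hR : constantCoeff (R := ℚ) R = 16) (hQ1 : constantCoeff (R := ℚ) Q1 = 16)
    (heq : X * (R * d⁄dX ℚ (d⁄dX ℚ h)) + Q1 * d⁄dX ℚ h + Q0 * h = 0)
    (h0 : coeff (R := ℚ) 0 h = 0) : h = 0 := by
  have key : ∀ n, coeff (R := ℚ) n h = 0 := by
    intro n
    induction n using Nat.strong_induction_on with
    | _ n ih =>
      match n with
      | 0 => exact h0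
      | (m + 1) =>
        have hh : ∀ j ≤ m, coeff (R := ℚ) j h = 0 := fun j hj => ih j (by omega)
        have e := congrArg (coeff (R := ℚ) m) heq
        rw [map_add, map_add, map_zero, vanish_mul Q0 hh, vanish_mul_d Q1 hh, hQ1] at e
        have hX : coeff (R := ℚ) m (X * (R * d⁄dX ℚ (d⁄dX ℚ h)))
            = 16 * ((m : ℚ) * (((m : ℚ) + 1) * coeff (R := ℚ) (m + 1) h)) := by
          match m with
          | 0 => rw [coeff_zero_X_mul]; push_cast; ring
          | (k + 1) =>
            rw [coeff_succ_X_mul]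
            have hh' : ∀ j ≤ k, coeff (R := ℚ) j (d⁄dX ℚ h) = 0 := fun j hj => by
              rw [coeff_derivative, hh (j + 1) (by omega), zero_mul]
            rw [vanish_mul_d R hh', hR, coeff_derivative]
            push_cast; ring
        rw [hX] at e
        have h16 : ((16 : ℚ) * ((m : ℚ) + 1) ^ 2) * coeff (R := ℚ) (m + 1) h = 0 := by
          linear_combination e
        have hne : ((16 : ℚ) * ((m : ℚ) + 1) ^ 2) ≠ 0 := by positivity
        exact (mul_eq_zero.mp h16).resolve_left hne
  ext n
  simp [key]

lemma deriv_ofNat (n : ℕ) [n.AtLeastTwo] :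
    d⁄dX ℚ (OfNat.ofNat n : PowerSeries ℚ) = 0 := by
  rw [← map_ofNat (C (R := ℚ)) n]; exact derivative_C

lemma d3 : d⁄dX ℚ (3 : PowerSeries ℚ) = 0 := deriv_ofNat 3
lemma d4 : d⁄dX ℚ (4 : PowerSeries ℚ) = 0 := deriv_ofNat 4
lemma d9 : d⁄dX ℚ (9 : PowerSeries ℚ) = 0 := deriv_ofNat 9
lemma d12 : d⁄dX ℚ (12 : PowerSeries ℚ) = 0 := deriv_ofNat 12
lemma d16 : d⁄dX ℚ (16 : PowerSeries ℚ) = 0 := deriv_ofNat 16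
lemma d24 : d⁄dX ℚ (24 : PowerSeries ℚ) = 0 := deriv_ofNat 24
lemma d27 : d⁄dX ℚ (27 : PowerSeries ℚ) = 0 := deriv_ofNat 27
lemma d45 : d⁄dX ℚ (45 : PowerSeries ℚ) = 0 := deriv_ofNat 45

end GA


open GA in
/-- `(1 + 3u)^{1/4} · ₂F₁(1/4,3/4;1;u) = ₂F₁(1/12,5/12;1;27u(1−u)²/(1+3u)³)`, where `s` is the
binomial series `(1+3u)^{1/4}` (with `s(0)=1`, `s⁴ = 1+3u`) and the inner argument `w` is the
power series with `(1+3u)³·w = 27u(1−u)²`. -/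
theorem hypergeom_goursat_deg3 (s w : PowerSeries ℚ)
    (hs0 : constantCoeff s = 1)
    (hs : s ^ 4 = 1 + 3 * X)
    (hw : (1 + 3 * X) ^ 3 * w = 27 * X * (1 - X) ^ 2) :
    s * hyp (1 / 4) (3 / 4) = pscomp (hyp (1 / 12) (5 / 12)) w := by
  have hw0 : constantCoeff (R := ℚ) w = 0 := by
    have h := congrArg (constantCoeff (R := ℚ)) hw
    simp only [map_mul, map_add, map_sub, map_pow, map_ofNat, map_one, constantCoeff_X] at h
    norm_num at h
    exact h
  set y := hyp (1 / 4) (3 / 4) with hy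
  set F := hyp (1 / 12) (5 / 12) with hFdef
  set g := pscomp F w with hgdef
  set g1 := pscomp (d⁄dX ℚ F) w with hg1def
  set g2 := pscomp (d⁄dX ℚ (d⁄dX ℚ F)) w with hg2def
  -- simp set for expanding derivatives
  -- specialized hypergeometric ODEs with cleared denominators
  have hODE1raw := hyp_ODE (1/4) (3/4)
  have hODE2raw := hyp_ODE (1/12) (5/12)
  have c1 : (C (R := ℚ) (1/4 + 3/4 + 1) : PowerSeries ℚ) = 2 := by
    rw [show (1/4 + 3/4 + 1 : ℚ) = 2 by norm_num]; exact map_ofNat _ 2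
  have c2 : (16 : PowerSeries ℚ) * C (R := ℚ) (1/4 * (3/4)) = 3 := by
    rw [show (16 : PowerSeries ℚ) = C (R := ℚ) 16 from (map_ofNat _ _).symm, ← map_mul,
      show (16 * (1/4 * (3/4)) : ℚ) = 3 by norm_num]
    exact map_ofNat _ 3
  have c3 : (144 : PowerSeries ℚ) * C (R := ℚ) (1/12 + 5/12 + 1) = 216 := by
    rw [show (144 : PowerSeries ℚ) = C (R := ℚ) 144 from (map_ofNat _ _).symm, ← map_mul,
      show (144 * (1/12 + 5/12 + 1) : ℚ) = 216 by norm_num]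
    exact map_ofNat _ 216
  have c4 : (144 : PowerSeries ℚ) * C (R := ℚ) (1/12 * (5/12)) = 5 := by
    rw [show (144 : PowerSeries ℚ) = C (R := ℚ) 144 from (map_ofNat _ _).symm, ← map_mul,
      show (144 * (1/12 * (5/12)) : ℚ) = 5 by norm_num]
    exact map_ofNat _ 5
  have ODE1 : 16 * ((X - X^2) * d⁄dX ℚ (d⁄dX ℚ y)) + (16 - 32*X) * d⁄dX ℚ y = 3 * y := by
    linear_combination (16 : PowerSeries ℚ) * hODE1raw + (16 * X * d⁄dX ℚ y) * c1 + y * c2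
  have ODE2 : 144 * ((X - X^2) * d⁄dX ℚ (d⁄dX ℚ F)) + (144 - 216*X) * d⁄dX ℚ F = 5 * F := by
    linear_combination (144 : PowerSeries ℚ) * hODE2raw + (X * d⁄dX ℚ F) * c3 + F * c4
  -- composed ODE (G3)
  have p144 : pscomp (144 : PowerSeries ℚ) w = 144 := pscomp_ofNat 144
  have p216 : pscomp (216 : PowerSeries ℚ) w = 216 := pscomp_ofNat 216
  have p5 : pscomp (5 : PowerSeries ℚ) w = 5 := pscomp_ofNat 5
  have G3 : 144 * ((w - w^2) * g2) + (144 - 216*w) * g1 = 5 * g := by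
    have h := congrArg (fun Φ => pscomp Φ w) ODE2
    simp only [pscomp_add, pscomp_sub, pscomp_mul hw0, pscomp_X hw0,
      pscomp_pow hw0, p144, p216, p5, pscomp_one] at h
    exact h
  -- chain rule facts
  have hG1 : d⁄dX ℚ g = g1 * d⁄dX ℚ w := pscomp_deriv hw0 F
  have hG2 : d⁄dX ℚ g1 = g2 * d⁄dX ℚ w := pscomp_deriv hw0 (d⁄dX ℚ F)
  have E4 : d⁄dX ℚ (d⁄dX ℚ g) = g1 * d⁄dX ℚ (d⁄dX ℚ w) + d⁄dX ℚ w * d⁄dX ℚ g1 := by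
    have h := congrArg (d⁄dX ℚ) hG1
    simpa only [Derivation.leibniz, smul_eq_mul] using h
  -- w facts
  have hone : (1+3*X)^3 * (1 - w) = (1-9*X)^2 := by linear_combination -hw
  have hw1 : (1+3*X)^4 * d⁄dX ℚ w = 27*(1-X)*(1-9*X) := by
    have E := congrArg (d⁄dX ℚ) hw
    simp only [Derivation.leibniz, Derivation.leibniz_pow, Derivation.map_sub, map_add,
      Derivation.map_one_eq_zero, d3, d9, d27, derivative_X, smul_eq_mul, nsmul_eq_mul,
      mul_zero, zero_mul, add_zero, zero_add, mul_one, one_mul, zero_sub, sub_zero] at E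
    linear_combination (1+3*X) * E - 9 * hw
  have hw2 : (1+3*X)^5 * d⁄dX ℚ (d⁄dX ℚ w) = 2916*X - 1458*X^2 - 594 := by
    have E := congrArg (d⁄dX ℚ) hw1
    simp only [Derivation.leibniz, Derivation.leibniz_pow, Derivation.map_sub, map_add,
      Derivation.map_one_eq_zero, d3, d9, d27, derivative_X, smul_eq_mul, nsmul_eq_mul,
      mul_zero, zero_mul, add_zero, zero_add, mul_one, one_mul, zero_sub, sub_zero] at E
    linear_combination (1+3*X) * E - 12 * hw1
  -- eliminate g1, g2
  have hg1e : (27*(1-X)*(1-9*X)) * g1 = (1+3*X)^4 * d⁄dX ℚ g := by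
    linear_combination (-((1+3*X)^4)) * hG1 - g1 * hw1
  have hg2e : (27*(1-X)*(1-9*X))^3 * g2
      = (27*(1-X)*(1-9*X)) * (1+3*X)^8 * d⁄dX ℚ (d⁄dX ℚ g)
        - (2916*X - 1458*X^2 - 594) * (1+3*X)^7 * d⁄dX ℚ g := by
    linear_combination
      (-(g2 * (27*(1-X)*(1-9*X)) * ((27*(1-X)*(1-9*X)) + (1+3*X)^4 * d⁄dX ℚ w))) * hw1
      - ((1+3*X)^8 * (27*(1-X)*(1-9*X)) * d⁄dX ℚ w) * hG2
      - ((1+3*X)^8 * (27*(1-X)*(1-9*X))) * E4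
      - ((1+3*X)^3 * (27*(1-X)*(1-9*X)) * g1) * hw2
      - ((1+3*X)^3 * (2916*X - 1458*X^2 - 594)) * hg1e
  -- the common second-order ODE, g side
  have hK0ne : (6561*(1-X)^2*(1-9*X)^2*(1+3*X)^6 : PowerSeries ℚ) ≠ 0 := by
    intro h
    have := congrArg (constantCoeff (R := ℚ)) h
    simp only [map_mul, map_add, map_sub, map_pow, map_ofNat, map_one, map_zero,
      constantCoeff_X] at this
    norm_num at this
  have KeyG : (6561*(1-X)^2*(1-9*X)^2*(1+3*X)^6 : PowerSeries ℚ)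
      * (16*(X*(1-X)*(1-9*X)*(1+3*X)^2) * d⁄dX ℚ (d⁄dX ℚ g)
        + (1944*X^4+648*X^3-456*X^2-104*X+16) * d⁄dX ℚ g
        + (-15*((1-X)*(1-9*X))) * g)
      = (6561*(1-X)^2*(1-9*X)^2*(1+3*X)^6 : PowerSeries ℚ) * 0 := by
    rw [mul_zero]
    linear_combination ((1+3*X)^6 * (27*(1-X)*(1-9*X))^3) * G3
      - (144 * (27*(1-X)*(1-9*X))^3 * g2 * (1-9*X)^2) * hw
      - (144 * (27*(1-X)*(1-9*X))^3 * g2 * ((1+3*X)^3*w)) * hone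
      + (216 * (1+3*X)^3 * (27*(1-X)*(1-9*X))^3 * g1) * hw
      - ((144*(1+3*X)^3 - 216*(27*X*(1-X)^2)) * (1+3*X)^3 * (27*(1-X)*(1-9*X))^2) * hg1e
      - (144 * (27*X*(1-X)^2) * (1-9*X)^2) * hg2e
  have Eg : 16*(X*(1-X)*(1-9*X)*(1+3*X)^2) * d⁄dX ℚ (d⁄dX ℚ g)
      + (1944*X^4+648*X^3-456*X^2-104*X+16) * d⁄dX ℚ g
      + (-15*((1-X)*(1-9*X))) * g = 0 := mul_left_cancel₀ hK0ne KeyG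
  -- f side
  have E3 := congrArg (d⁄dX ℚ) hs
  simp only [Derivation.leibniz_pow, Derivation.map_sub, map_add, Derivation.map_one_eq_zero,
    d3, derivative_X, smul_eq_mul, nsmul_eq_mul, mul_zero, zero_mul, add_zero, zero_add,
    mul_one, one_mul, Derivation.leibniz] at E3
  have hds : 4*((1+3*X) * d⁄dX ℚ s) = 3*s := by
    linear_combination s * E3 - 4 * (d⁄dX ℚ s) * hs
  have hd1 : d⁄dX ℚ (s * y) = s * d⁄dX ℚ y + y * d⁄dX ℚ s := by
    simp only [Derivation.leibniz, smul_eq_mul]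
  have hd2exp : d⁄dX ℚ (s * d⁄dX ℚ y + y * d⁄dX ℚ s)
      = s * d⁄dX ℚ (d⁄dX ℚ y) + d⁄dX ℚ y * d⁄dX ℚ s
        + (y * d⁄dX ℚ (d⁄dX ℚ s) + d⁄dX ℚ s * d⁄dX ℚ y) := by
    simp only [map_add, Derivation.leibniz, smul_eq_mul]
  have E1 : 4*((1+3*X)*(s * d⁄dX ℚ y))
      = 4*((1+3*X)*(s * d⁄dX ℚ y + y * d⁄dX ℚ s)) - 3*(s*y) := by
    linear_combination (-y) * hds
  have E1' := congrArg (d⁄dX ℚ) E1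
  simp only [Derivation.leibniz, Derivation.leibniz_pow, Derivation.map_sub, map_add,
    Derivation.map_one_eq_zero, d3, d4, derivative_X, smul_eq_mul, nsmul_eq_mul,
    mul_zero, zero_mul, add_zero, zero_add, mul_one, one_mul] at E1'
  have E2 : 16*((1+3*X)^2*(s * d⁄dX ℚ (d⁄dX ℚ y)))
      = 16*((1+3*X)^2 * (s * d⁄dX ℚ (d⁄dX ℚ y) + d⁄dX ℚ y * d⁄dX ℚ s
          + (y * d⁄dX ℚ (d⁄dX ℚ s) + d⁄dX ℚ s * d⁄dX ℚ y)))
        - 24*((1+3*X) * (s * d⁄dX ℚ y + y * d⁄dX ℚ s)) + 45*(s*y) := by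
    linear_combination (4*(1+3*X)) * E1' - 15 * E1 - (4*(1+3*X) * d⁄dX ℚ y) * hds
  have Ef0 : 16*((1+3*X)^2*(X*(1-X))) * (s * d⁄dX ℚ (d⁄dX ℚ y) + d⁄dX ℚ y * d⁄dX ℚ s
          + (y * d⁄dX ℚ (d⁄dX ℚ s) + d⁄dX ℚ s * d⁄dX ℚ y))
      + (16+40*X-96*X^2-216*X^3) * (s * d⁄dX ℚ y + y * d⁄dX ℚ s)
      + 15*(X-1)*(s*y) = 0 := by
    linear_combination (s*(1+3*X)^2) * ODE1 - (X - X^2) * E2 - ((4-8*X)*(1+3*X)) * E1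
  have hsub1 : d⁄dX ℚ (s*y - g) = (s * d⁄dX ℚ y + y * d⁄dX ℚ s) - d⁄dX ℚ g := by
    rw [Derivation.map_sub, hd1]
  have hsub2 : d⁄dX ℚ (d⁄dX ℚ (s*y - g))
      = (s * d⁄dX ℚ (d⁄dX ℚ y) + d⁄dX ℚ y * d⁄dX ℚ s
          + (y * d⁄dX ℚ (d⁄dX ℚ s) + d⁄dX ℚ s * d⁄dX ℚ y))
        - d⁄dX ℚ (d⁄dX ℚ g) := by
    rw [hsub1, Derivation.map_sub, hd2exp]
  have heq : X * ((16*((1-X)*(1-9*X)*(1+3*X)^2)) * d⁄dX ℚ (d⁄dX ℚ (s*y - g)))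
      + (1944*X^4+648*X^3-456*X^2-104*X+16) * d⁄dX ℚ (s*y - g)
      + (-15*((1-X)*(1-9*X))) * (s*y - g) = 0 := by
    rw [hsub2, hsub1]
    linear_combination (1-9*X) * Ef0 - Eg
  have hRc : constantCoeff (R := ℚ) (16*((1-X)*(1-9*X)*(1+3*X)^2) : PowerSeries ℚ) = 16 := by
    simp only [map_mul, map_add, map_sub, map_pow, map_ofNat, map_one, constantCoeff_X]
    norm_num
  have hQ1c : constantCoeff (R := ℚ)
      (1944*X^4+648*X^3-456*X^2-104*X+16 : PowerSeries ℚ) = 16 := by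
    simp only [map_mul, map_add, map_sub, map_pow, map_ofNat, map_one, constantCoeff_X]
    norm_num
  have h0 : coeff (R := ℚ) 0 (s*y - g) = 0 := by
    have hg0 : coeff (R := ℚ) 0 g = 1 := by
      rw [hgdef, coeff_pscomp, Finset.sum_range_one, pow_zero, coeff_zero_eq_constantCoeff,
        map_one, mul_one, hFdef, constantCoeff_hyp]
    rw [map_sub, hg0, coeff_zero_eq_constantCoeff, map_mul, hs0, hy, constantCoeff_hyp]
    norm_num
  have hfinal : s*y - g = 0 := sol_unique hRc hQ1c heq h0
  exact sub_eq_zero.mp hfinal
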